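/- Let M and N be left A-modules with flat connections ∇_M and ∇_N with respect to the universal differential calculus, and equip each with its induced right operation (x·a := a x − Σ x_A a x_M). Let c̃: M⊗N → N⊗M be c̃(m⊗n) = n⊗m − Σ m_A n ⊗ m_M. Then c̃ is right A-linear up to balanced relations: for all a ∈ A, m ∈ M, n ∈ N, the element obtained by applying the induced right action of a to the second (M-) tensor factor of c̃(m⊗n), minus c̃(m⊗(n·a)), lies in the K-linear span of {(y b)⊗x − y⊗(b x) : y ∈ N, b ∈ A, x ∈ M} inside N⊗M (where y b is the induced right action on N and b x the left action on M). -/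
import Mathlib


open TensorProduct

variable (K A M : Type*) [Field K] [Ring A] [Algebra K A]
  [AddCommGroup M] [Module K M] [Module A M] [IsScalarTower K A M]

/-- The action map `A ⊗ M → M`, `a ⊗ m ↦ a • m`. -/
noncomputable def actMap : A ⊗[K] M →ₗ[K] M :=
  TensorProduct.lift (LinearMap.mk₂ K (fun a m => a • m)
    (fun a b m => add_smul a b m)
    (fun k a m => smul_assoc k a m)
    (fun a m n => smul_add a m n)
    (fun k a m => (smul_comm k a m).symm))

/-- Left multiplication by `a : A` on a left `A`-module, as a `K`-linear map. -/
def lsmulMap (a : A) : M →ₗ[K] M where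
  toFun := fun m => a • m
  map_add' := fun x y => smul_add a x y
  map_smul' := fun k m => (smul_comm k a m).symm

/-- `a ↦ a • n` as a `K`-linear map `A → M`. -/
def smulBy (n : M) : A →ₗ[K] M where
  toFun := fun a => a • n
  map_add' := fun a b => add_smul a b n
  map_smul' := fun k a => smul_assoc k a n

/-- `D : M → A ⊗ M` is a connection with respect to the universal differential
calculus. -/
def IsConnection (D : M →ₗ[K] A ⊗[K] M) : Prop :=
  (∀ m : M, actMap K A M (D m) = 0) ∧
  ∀ (a : A) (m : M),
    D (a • m) = LinearMap.rTensor M (LinearMap.mulLeft K a) (D m)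
      + (1 : A) ⊗ₜ[K] (a • m) - a ⊗ₜ[K] m

/-- Flatness of a connection: `Σ 1 ⊗ m_A ⊗ m_M = Σ m_A ⊗ D(m_M)`. -/
def IsFlatConnection (D : M →ₗ[K] A ⊗[K] M) : Prop :=
  ∀ m : M, (1 : A) ⊗ₜ[K] (D m) = LinearMap.lTensor A D (D m)

/-- The induced right operation `m·a := a m − Σ m_A a m_M`. -/
noncomputable def rop (D : M →ₗ[K] A ⊗[K] M) (m : M) (a : A) : M :=
  a • m - actMap K A M (LinearMap.rTensor M (LinearMap.mulRight K a) (D m))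

variable (N : Type*) [AddCommGroup N] [Module K N] [Module A N] [IsScalarTower K A N]

/-- The map `N ⊗ A → N`, `n ⊗ a ↦ a • n`. -/
noncomputable def ract : N ⊗[K] A →ₗ[K] N :=
  TensorProduct.lift (LinearMap.mk₂ K (fun n a => a • n)
    (fun n₁ n₂ a => smul_add a n₁ n₂)
    (fun k n a => (smul_comm k a n).symm)
    (fun n a b => add_smul a b n)
    (fun k n a => smul_assoc k a n))

/-- The map `c̃ : M ⊗ N → N ⊗ M`, `m ⊗ n ↦ n ⊗ m − Σ (m_A • n) ⊗ m_M`, associated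
with a connection `D` on `M`. -/
noncomputable def ctMap (D : M →ₗ[K] A ⊗[K] M) : M ⊗[K] N →ₗ[K] N ⊗[K] M :=
  (LinearMap.id - (LinearMap.rTensor M (ract K A N)).comp
      (((TensorProduct.assoc K N A M).symm.toLinearMap).comp
        (LinearMap.lTensor N D))).comp
    (TensorProduct.comm K M N).toLinearMap

/-- The induced right operation by `a`, `m ↦ m·a = a m − Σ m_A a m_M`, as a `K`-linear
map `M → M`. -/
noncomputable def ropMap (D : M →ₗ[K] A ⊗[K] M) (a : A) : M →ₗ[K] M :=
  lsmulMap K A M a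
    - (actMap K A M).comp ((LinearMap.rTensor M (LinearMap.mulRight K a)).comp D)

section Aux

variable {K A M N : Type*} [Field K] [Ring A] [Algebra K A]
  [AddCommGroup M] [Module K M] [Module A M] [IsScalarTower K A M]
  [AddCommGroup N] [Module K N] [Module A N] [IsScalarTower K A N]

lemma actMap_tmul' (a : A) (x : M) : actMap K A M (a ⊗ₜ[K] x) = a • x := rfl

lemma smulBy_apply' (x : M) (a : A) : smulBy K A M x a = a • x := rfl

lemma lsmulMap_apply' (a : A) (x : M) : lsmulMap K A M a x = a • x := rfl

lemma smul_actMap (a : A) (w : A ⊗[K] N) :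
    a • actMap K A N w
      = actMap K A N (LinearMap.rTensor N (LinearMap.mulLeft K a) w) := by
  induction w using TensorProduct.induction_on with
  | zero => simp
  | tmul b x =>
      simp [LinearMap.rTensor_tmul, LinearMap.mulLeft_apply, actMap_tmul', mul_smul]
  | add x y hx hy => simp [smul_add, map_add, hx, hy]

lemma ctMap_tmul (D : M →ₗ[K] A ⊗[K] M) (m : M) (n : N) :
    ctMap K A M N D (m ⊗ₜ[K] n)
      = n ⊗ₜ[K] m - LinearMap.rTensor M (smulBy K A N n) (D m) := by
  have h : ∀ u : A ⊗[K] M,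
      LinearMap.rTensor M (ract K A N)
          ((TensorProduct.assoc K N A M).symm (n ⊗ₜ[K] u))
        = LinearMap.rTensor M (smulBy K A N n) u := by
    intro u
    induction u using TensorProduct.induction_on with
    | zero => simp
    | tmul b x =>
        simp only [TensorProduct.assoc_symm_tmul, LinearMap.rTensor_tmul]
        rfl
    | add x y hx hy => simp [tmul_add, map_add, hx, hy]
  simp only [ctMap, LinearMap.comp_apply, LinearEquiv.coe_coe,
    TensorProduct.comm_tmul, LinearMap.sub_apply, LinearMap.id_apply,
    LinearMap.lTensor_tmul]
  rw [h (D m)]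

lemma rop_smul_left (D : N →ₗ[K] A ⊗[K] N) (hconn : IsConnection K A N D)
    (a b : A) (n : N) :
    rop K A N D (b • n) a = b • rop K A N D n a := by
  have hc : LinearMap.rTensor N (LinearMap.mulRight K a)
        (LinearMap.rTensor N (LinearMap.mulLeft K b) (D n))
      = LinearMap.rTensor N (LinearMap.mulLeft K b)
        (LinearMap.rTensor N (LinearMap.mulRight K a) (D n)) := by
    have key : (LinearMap.mulRight K a).comp (LinearMap.mulLeft K b)
        = (LinearMap.mulLeft K b).comp (LinearMap.mulRight K a) := by
      ext x; simp [mul_assoc]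
    rw [← LinearMap.rTensor_comp_apply, ← LinearMap.rTensor_comp_apply, key]
  unfold rop
  rw [hconn.2 b n]
  simp only [map_sub, map_add, LinearMap.rTensor_tmul, LinearMap.mulRight_apply,
    one_mul, actMap_tmul']
  rw [hc, ← smul_actMap, smul_sub, mul_smul]
  abel

lemma lT_flat (D : M →ₗ[K] A ⊗[K] M) (hflat : IsFlatConnection K A M D)
    (n : N) (g : A ⊗[K] M →ₗ[K] M) (m : M) :
    LinearMap.lTensor N (g ∘ₗ D)
        (LinearMap.rTensor M (smulBy K A N n) (D m))
      = n ⊗ₜ[K] g (D m) := by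
  have h : ∀ u : A ⊗[K] M,
      LinearMap.lTensor N (g ∘ₗ D) (LinearMap.rTensor M (smulBy K A N n) u)
        = TensorProduct.map (smulBy K A N n) g (LinearMap.lTensor A D u) := by
    intro u
    induction u using TensorProduct.induction_on with
    | zero => simp
    | tmul b x => simp
    | add x y hx hy => simp [map_add, hx, hy]
  rw [h (D m), ← hflat m, TensorProduct.map_tmul, smulBy_apply', one_smul]

end Aux

/-- For flat connections `DM` on `M` and `DN` on `N`, the map
`c̃ : M ⊗ N → N ⊗ M` is right `A`-linear up to the balanced relations defining
`N ⊗_A M` (with the induced right actions). -/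
theorem ctMap_right_linear_up_to_balanced
    (DM : M →ₗ[K] A ⊗[K] M) (hconnM : IsConnection K A M DM)
    (hflatM : IsFlatConnection K A M DM)
    (DN : N →ₗ[K] A ⊗[K] N) (hconnN : IsConnection K A N DN)
    (hflatN : IsFlatConnection K A N DN)
    (a : A) (m : M) (n : N) :
    LinearMap.lTensor N (ropMap K A M DM a) (ctMap K A M N DM (m ⊗ₜ[K] n))
        - ctMap K A M N DM (m ⊗ₜ[K] (rop K A N DN n a))
      ∈ Submodule.span K
          {z : N ⊗[K] M | ∃ (y : N) (b : A) (x : M),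
            z = (rop K A N DN y b) ⊗ₜ[K] x - y ⊗ₜ[K] (b • x)} := by
  set S : Set (N ⊗[K] M) :=
    {z : N ⊗[K] M | ∃ (y : N) (b : A) (x : M),
      z = (rop K A N DN y b) ⊗ₜ[K] x - y ⊗ₜ[K] (b • x)} with hS
  -- the two correction terms
  have hgen1 : n ⊗ₜ[K] (a • m) - (rop K A N DN n a) ⊗ₜ[K] m ∈ Submodule.span K S := by
    have : (rop K A N DN n a) ⊗ₜ[K] m - n ⊗ₜ[K] (a • m) ∈ Submodule.span K S :=
      Submodule.subset_span ⟨n, a, m, rfl⟩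
    have h := Submodule.neg_mem _ this
    rwa [neg_sub] at h
  have hH : ∀ u : A ⊗[K] M,
      LinearMap.rTensor M (smulBy K A N (rop K A N DN n a)) u
          - LinearMap.lTensor N (lsmulMap K A M a)
              (LinearMap.rTensor M (smulBy K A N n) u)
        ∈ Submodule.span K S := by
    intro u
    induction u using TensorProduct.induction_on with
    | zero => simp
    | tmul b x =>
        simp only [LinearMap.rTensor_tmul, LinearMap.lTensor_tmul,
          smulBy_apply', lsmulMap_apply']
        rw [← rop_smul_left DN hconnN a b n]
        exact Submodule.subset_span ⟨b • n, a, x, rfl⟩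
    | add x y hx hy =>
        rw [map_add, map_add, map_add]
        have : LinearMap.rTensor M (smulBy K A N (rop K A N DN n a)) x
              + LinearMap.rTensor M (smulBy K A N (rop K A N DN n a)) y
              - (LinearMap.lTensor N (lsmulMap K A M a)
                  (LinearMap.rTensor M (smulBy K A N n) x)
                + LinearMap.lTensor N (lsmulMap K A M a)
                  (LinearMap.rTensor M (smulBy K A N n) y))
            = (LinearMap.rTensor M (smulBy K A N (rop K A N DN n a)) x
                - LinearMap.lTensor N (lsmulMap K A M a)
                  (LinearMap.rTensor M (smulBy K A N n) x))
              + (LinearMap.rTensor M (smulBy K A N (rop K A N DN n a)) y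
                - LinearMap.lTensor N (lsmulMap K A M a)
                  (LinearMap.rTensor M (smulBy K A N n) y)) := by abel
        rw [this]
        exact Submodule.add_mem _ hx hy
  -- the main rewriting
  have hsub : LinearMap.lTensor N (ropMap K A M DM a)
      = LinearMap.lTensor N (lsmulMap K A M a)
        - LinearMap.lTensor N
            ((actMap K A M ∘ₗ LinearMap.rTensor M (LinearMap.mulRight K a)) ∘ₗ DM) := by
    rw [← LinearMap.lTensor_sub]
    congr 1
  have hflat' := lT_flat DM hflatM n
      (actMap K A M ∘ₗ LinearMap.rTensor M (LinearMap.mulRight K a)) m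
  have hmain :
      LinearMap.lTensor N (ropMap K A M DM a) (ctMap K A M N DM (m ⊗ₜ[K] n))
          - ctMap K A M N DM (m ⊗ₜ[K] (rop K A N DN n a))
        = (n ⊗ₜ[K] (a • m) - (rop K A N DN n a) ⊗ₜ[K] m)
          + (LinearMap.rTensor M (smulBy K A N (rop K A N DN n a)) (DM m)
            - LinearMap.lTensor N (lsmulMap K A M a)
                (LinearMap.rTensor M (smulBy K A N n) (DM m))) := by
    rw [ctMap_tmul, ctMap_tmul, map_sub, LinearMap.lTensor_tmul, hsub,
      LinearMap.sub_apply, hflat']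
    have hrop : ropMap K A M DM a m
        = a • m - (actMap K A M ∘ₗ LinearMap.rTensor M (LinearMap.mulRight K a)) (DM m) := rfl
    rw [hrop, TensorProduct.tmul_sub]
    abel
  rw [hmain]
  exact Submodule.add_mem _ hgen1 (hH (DM m))
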